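/- Let n ≥ 2 and Ξ = T_{V₊} ∩ S^n_ℂ. Then Ξ = { g·( cos(r) e_n + (sin(r)/r) v ) : g ∈ G^c, v ∈ V with last coordinate v_n = 0, v₀ > 0, [v,v]_V > 0, and r := √([v,v]_V) ∈ (0, π) }. In other words, Ξ is the G^c-orbit of the exponential image Exp_{e_n}(Ω^π_{e_n}) of the truncated forward light cone in the tangent space at the de Sitter point e_n. (Paper: Theorem 3.8, thm:3.9.) -/

import Mathlib

open MeasureTheory

noncomputable section

/-- Standard complex bilinear form on ℂ^{n+1}. -/
def dotC (n : ℕ) (z w : Fin (n+1) → ℂ) : ℂ := ∑ j, z j * w j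

/-- The real form V = ℝe₀ ⊕ iℝⁿ. -/
def memV (n : ℕ) (z : Fin (n+1) → ℂ) : Prop :=
  (z 0).im = 0 ∧ ∀ j, j ≠ 0 → (z j).re = 0

/-- The open forward light cone V₊ ⊆ V. -/
def memVplus (n : ℕ) (z : Fin (n+1) → ℂ) : Prop :=
  memV n z ∧ 0 < (z 0).re ∧ 0 < (dotC n z z).re

/-- The tube domain T_{V₊} = V₊ + iV. -/
def memTV (n : ℕ) (z : Fin (n+1) → ℂ) : Prop :=
  ∃ x y, memVplus n x ∧ memV n y ∧ z = x + Complex.I • y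

/-- The crown Ξ = T_{V₊} ∩ S^n_ℂ. -/
def memXi (n : ℕ) (z : Fin (n+1) → ℂ) : Prop :=
  memTV n z ∧ dotC n z z = 1

/-- The forward light rays L^n₊. -/
def memLn (n : ℕ) (v : Fin (n+1) → ℂ) : Prop :=
  memV n v ∧ dotC n v v = 0 ∧ 0 < (v 0).re

/-- The hyperboloid H^n_V ⊆ V. -/
def memHn (n : ℕ) (u : Fin (n+1) → ℂ) : Prop :=
  memV n u ∧ 0 < (u 0).re ∧ dotC n u u = 1

/-- The conjugation σ_V fixing V pointwise. -/
def sigmaV (n : ℕ) (z : Fin (n+1) → ℂ) : Fin (n+1) → ℂ :=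
  fun j => if j = 0 then (starRingEnd ℂ) (z j) else -((starRingEnd ℂ) (z j))

/-- The conjugation σ_E fixing ℝ^{n+1} pointwise. -/
def sigmaE (n : ℕ) (z : Fin (n+1) → ℂ) : Fin (n+1) → ℂ := fun j => (starRingEnd ℂ) (z j)

/-- Standard basis vectors of ℂ^{n+1}. -/
def stdC (n : ℕ) (k : Fin (n+1)) : Fin (n+1) → ℂ := fun j => if j = k then 1 else 0

/-- The group G^c ≅ O(1,n)(ℝ)^↑, realized as complex-linear maps preserving the
bilinear form, preserving V, and positively oriented in time. -/
def isGc (n : ℕ) (g : (Fin (n+1) → ℂ) →ₗ[ℂ] (Fin (n+1) → ℂ)) : Prop :=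
  Function.Bijective g ∧ (∀ z w, dotC n (g z) (g w) = dotC n z w) ∧
  (∀ z, memV n z → memV n (g z)) ∧ 0 < ((g (stdC n 0)) 0).re

/-- ξ_u = e₀ + iu for u ∈ ℝⁿ. -/
def xiC (n : ℕ) (u : Fin n → ℝ) : Fin (n+1) → ℂ :=
  Fin.cons 1 (fun j => Complex.I * (u j : ℂ))

/-- The unit sphere S^{n-1} ⊆ ℝⁿ. -/
def unitSph (n : ℕ) (u : Fin n → ℝ) : Prop := ∑ j, u j ^ 2 = 1

/-- The action of G^c on the sphere S^{n-1}, defined via g ξ_u = j(g,u) ξ_{g.u}. -/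
def gact (n : ℕ) (g : (Fin (n+1) → ℂ) →ₗ[ℂ] (Fin (n+1) → ℂ)) (u : Fin n → ℝ) : Fin n → ℝ :=
  fun j => ((g (xiC n u)) j.succ).im / ((g (xiC n u)) 0).re

/-- μ is the rotation-invariant Borel probability measure on S^{n-1} ⊆ ℝⁿ. -/
def IsSphereMeasure (n : ℕ) (μ : Measure (Fin n → ℝ)) : Prop :=
  IsProbabilityMeasure μ ∧ μ {u | unitSph n u}ᶜ = 0 ∧
  ∀ g : Matrix.orthogonalGroup (Fin n) ℝ,
    μ.map (fun u => (g : Matrix (Fin n) (Fin n) ℝ).mulVec u) = μ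

/-- ρ = (n-1)/2 as a complex number. -/
def rhoC (n : ℕ) : ℂ := ((n : ℂ) - 1) / 2

/-- λ_m = √(ρ²−m²) for m ≤ ρ and i√(m²−ρ²) for m ≥ ρ. -/
def lamOf (n : ℕ) (m : ℝ) : ℂ :=
  if m ≤ ((n : ℝ) - 1) / 2 then (Real.sqrt ((((n : ℝ) - 1) / 2) ^ 2 - m ^ 2) : ℂ)
  else Complex.I * (Real.sqrt (m ^ 2 - (((n : ℝ) - 1) / 2) ^ 2) : ℂ)


namespace Stmt8

variable {n : ℕ}

lemma dotC_add_left (z z' w : Fin (n+1) → ℂ) :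
    dotC n (z + z') w = dotC n z w + dotC n z' w := by
  simp [dotC, add_mul, Finset.sum_add_distrib]

lemma dotC_add_right (z w w' : Fin (n+1) → ℂ) :
    dotC n z (w + w') = dotC n z w + dotC n z w' := by
  simp [dotC, mul_add, Finset.sum_add_distrib]

lemma dotC_smul_left (c : ℂ) (z w : Fin (n+1) → ℂ) :
    dotC n (c • z) w = c * dotC n z w := by
  simp [dotC, Finset.mul_sum, mul_assoc]

lemma dotC_smul_right (c : ℂ) (z w : Fin (n+1) → ℂ) :
    dotC n z (c • w) = c * dotC n z w := by
  simp [dotC, Finset.mul_sum]; apply Finset.sum_congr rfl; intros; ring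

lemma dotC_comm (z w : Fin (n+1) → ℂ) : dotC n z w = dotC n w z := by
  simp [dotC, mul_comm]

lemma dotC_std_right (z : Fin (n+1) → ℂ) (k : Fin (n+1)) :
    dotC n z (stdC n k) = z k := by
  simp [dotC, stdC]

lemma dotC_std_left (z : Fin (n+1) → ℂ) (k : Fin (n+1)) :
    dotC n (stdC n k) z = z k := by
  rw [dotC_comm, dotC_std_right]

lemma dotC_re {z w : Fin (n+1) → ℂ} (hz : memV n z) (hw : memV n w) :
    (dotC n z w).re
      = (z 0).re * (w 0).re - ∑ j : Fin n, (z j.succ).im * (w j.succ).im := by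
  rw [dotC, Complex.re_sum, Fin.sum_univ_succ]
  rw [Complex.mul_re, hz.1, hw.1]
  have : ∀ j : Fin n, (z j.succ * w j.succ).re
      = -((z j.succ).im * (w j.succ).im) := by
    intro j
    rw [Complex.mul_re, hz.2 _ (Fin.succ_ne_zero j), hw.2 _ (Fin.succ_ne_zero j)]
    ring
  rw [Finset.sum_congr rfl (fun j _ => this j)]
  simp [Finset.sum_neg_distrib]
  ring

lemma dotC_im {z w : Fin (n+1) → ℂ} (hz : memV n z) (hw : memV n w) :
    (dotC n z w).im = 0 := by
  rw [dotC, Complex.im_sum]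
  apply Finset.sum_eq_zero
  intro j _
  rw [Complex.mul_im]
  by_cases h : j = 0
  · subst h; rw [hz.1, hw.1]; ring
  · rw [hz.2 _ h, hw.2 _ h]; ring

lemma dotC_real {z w : Fin (n+1) → ℂ} (hz : memV n z) (hw : memV n w) :
    dotC n z w = ((dotC n z w).re : ℂ) := by
  rw [Complex.ext_iff]
  simp [dotC_im hz hw]

lemma cone_real {p q : ℝ} {f h : Fin n → ℝ} (hp : 0 < p)
    (hpf : 0 < p * p - ∑ j, f j * f j) (hq : 0 < q * q - ∑ j, h j * h j)
    (hpq : 0 < p * q - ∑ j, f j * h j) : 0 < q := by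
  simp only [← pow_two] at hpf hq
  by_contra hq0
  push_neg at hq0
  have hcs := Finset.sum_mul_sq_le_sq_mul_sq Finset.univ f h
  have hF : (0:ℝ) ≤ ∑ j, f j ^ 2 := Finset.sum_nonneg (fun j _ => sq_nonneg _)
  have hH : (0:ℝ) ≤ ∑ j, h j ^ 2 := Finset.sum_nonneg (fun j _ => sq_nonneg _)
  have hq2 : 0 < q ^ 2 := by nlinarith
  have hqneg : q < 0 := by nlinarith
  have h2 : p * q < 0 := mul_neg_of_pos_of_neg hp hqneg
  have h3 : (p*q)^2 < (∑ j, f j * h j)^2 := by nlinarith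
  have h4 : (∑ j, f j ^ 2) * (∑ j, h j ^ 2) ≤ p^2 * q^2 := by nlinarith
  nlinarith

lemma perp_spacelike {p q : ℝ} {f h : Fin n → ℝ} (hp : 0 < p)
    (hpf : 0 < p * p - ∑ j, f j * f j) (horth : p * q - ∑ j, f j * h j = 0) :
    q * q - ∑ j, h j * h j ≤ 0 := by
  simp only [← pow_two] at hpf ⊢
  have hcs := Finset.sum_mul_sq_le_sq_mul_sq Finset.univ f h
  have hH : (0:ℝ) ≤ ∑ j, h j ^ 2 := Finset.sum_nonneg (fun j _ => sq_nonneg _)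
  have hs : ∑ j, f j * h j = p * q := by linarith
  rw [hs] at hcs
  have h4 : (∑ j, f j ^ 2) * ∑ j, h j ^ 2 ≤ p ^ 2 * ∑ j, h j ^ 2 := by nlinarith
  have h5 : p ^ 2 * q ^ 2 ≤ p ^ 2 * ∑ j, h j ^ 2 := by nlinarith
  have hp2 : 0 < p ^ 2 := by positivity
  have := (mul_le_mul_iff_right₀ hp2).mp h5
  linarith

lemma perp_spacelike_strict {p q : ℝ} {f h : Fin n → ℝ} (hp : 0 < p)
    (hpf : 0 < p * p - ∑ j, f j * f j) (horth : p * q - ∑ j, f j * h j = 0)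
    (hh : 0 < ∑ j, h j * h j) : q * q - ∑ j, h j * h j < 0 := by
  simp only [← pow_two] at hpf hh ⊢
  have hcs := Finset.sum_mul_sq_le_sq_mul_sq Finset.univ f h
  have hs : ∑ j, f j * h j = p * q := by linarith
  rw [hs] at hcs
  have h4 : (∑ j, f j ^ 2) * ∑ j, h j ^ 2 < p ^ 2 * ∑ j, h j ^ 2 := by nlinarith
  have h5 : p ^ 2 * q ^ 2 < p ^ 2 * ∑ j, h j ^ 2 := by nlinarith
  have hp2 : 0 < p ^ 2 := by positivity
  have := (mul_lt_mul_iff_right₀ hp2).mp h5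
  linarith

lemma memVplus_std0 : memVplus n (stdC n 0) := by
  refine ⟨⟨by simp [stdC], fun j hj => by simp [stdC, hj]⟩, by simp [stdC], ?_⟩
  have : dotC n (stdC n 0) (stdC n 0) = 1 := by rw [dotC_std_right]; simp [stdC]
  rw [this]; norm_num

lemma cone_complex {u w : Fin (n+1) → ℂ} (hu : memV n u) (hu0 : 0 < (u 0).re)
    (huu : 0 < (dotC n u u).re) (hw : memV n w) (hww : 0 < (dotC n w w).re)
    (huw : 0 < (dotC n u w).re) : 0 < (w 0).re := by
  rw [dotC_re hu hu] at huu
  rw [dotC_re hw hw] at hww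
  rw [dotC_re hu hw] at huw
  exact cone_real (f := fun j => (u j.succ).im) (h := fun j => (w j.succ).im) hu0
    (by simpa using huu) (by simpa using hww) (by simpa using huw)

lemma gc_mapsVplus {g : (Fin (n+1) → ℂ) →ₗ[ℂ] (Fin (n+1) → ℂ)}
    (hg : isGc n g) {z : Fin (n+1) → ℂ} (hz : memVplus n z) : memVplus n (g z) := by
  obtain ⟨hbij, hdot, hV, hpos⟩ := hg
  have hu : memV n (g (stdC n 0)) := hV _ memVplus_std0.1
  have huu : 0 < (dotC n (g (stdC n 0)) (g (stdC n 0))).re := by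
    rw [hdot]; exact memVplus_std0.2.2
  have hgw : memV n (g z) := hV _ hz.1
  have hww : 0 < (dotC n (g z) (g z)).re := by rw [hdot]; exact hz.2.2
  have huw : 0 < (dotC n (g (stdC n 0)) (g z)).re := by
    rw [hdot, dotC_std_left]; exact hz.2.1
  exact ⟨hgw, cone_complex hu hpos huu hgw hww huw, hww⟩

lemma gc_comp {g₁ g₂ : (Fin (n+1) → ℂ) →ₗ[ℂ] (Fin (n+1) → ℂ)}
    (h1 : isGc n g₁) (h2 : isGc n g₂) : isGc n (g₁ ∘ₗ g₂) := by
  refine ⟨h1.1.comp h2.1, fun z w => ?_, fun z hz => ?_, ?_⟩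
  · simp only [LinearMap.comp_apply]; rw [h1.2.1, h2.2.1]
  · simp only [LinearMap.comp_apply]; exact h1.2.2.1 _ (h2.2.2.1 _ hz)
  · have := (gc_mapsVplus h1 (gc_mapsVplus h2 memVplus_std0)).2.1
    simpa using this


/-- Reflection in the hyperplane orthogonal to `D` (identity if `dotC D D = 0`). -/
def refl (n : ℕ) (D : Fin (n+1) → ℂ) : (Fin (n+1) → ℂ) →ₗ[ℂ] (Fin (n+1) → ℂ) where
  toFun z := z - (2 * dotC n z D / dotC n D D) • D
  map_add' z z' := by
    rw [dotC_add_left, mul_add, add_div, add_smul]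
    abel
  map_smul' c z := by
    rw [dotC_smul_left]
    have : 2 * (c * dotC n z D) / dotC n D D = c * (2 * dotC n z D / dotC n D D) := by
      ring
    rw [this, mul_smul, smul_sub, RingHom.id_apply]

lemma refl_apply (D z : Fin (n+1) → ℂ) :
    refl n D z = z - (2 * dotC n z D / dotC n D D) • D := rfl

lemma refl_dot (D z w : Fin (n+1) → ℂ) :
    dotC n (refl n D z) (refl n D w) = dotC n z w := by
  by_cases hD : dotC n D D = 0
  · simp [refl_apply, hD]
  · simp only [refl_apply, sub_eq_add_neg, ← neg_smul]
    simp only [dotC_add_left, dotC_add_right, dotC_smul_left, dotC_smul_right]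
    rw [dotC_comm D w]
    field_simp
    ring

lemma dotC_refl_D (D z : Fin (n+1) → ℂ) (hD : dotC n D D ≠ 0) :
    dotC n (refl n D z) D = - dotC n z D := by
  simp only [refl_apply, sub_eq_add_neg, ← neg_smul]
  simp only [dotC_add_left, dotC_smul_left]
  field_simp
  ring

lemma refl_refl (D z : Fin (n+1) → ℂ) : refl n D (refl n D z) = z := by
  by_cases hD : dotC n D D = 0
  · simp [refl_apply, hD]
  · rw [refl_apply (z := refl n D z), dotC_refl_D D z hD, refl_apply]
    have : (2 * -dotC n z D / dotC n D D) = -(2 * dotC n z D / dotC n D D) := by ring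
    rw [this, neg_smul, sub_neg_eq_add, sub_add_cancel]

lemma refl_bij (D : Fin (n+1) → ℂ) : Function.Bijective (refl n D) :=
  Function.Involutive.bijective (fun z => refl_refl D z)

/-- The reflection along a real spatial vector. -/
def consD (n : ℕ) (d : Fin n → ℝ) : Fin (n+1) → ℂ :=
  Fin.cons 0 (fun m => (d m : ℂ))

lemma dotC_consD (d e : Fin n → ℝ) :
    dotC n (consD n d) (consD n e) = ((∑ m, d m * e m : ℝ) : ℂ) := by
  rw [dotC, Fin.sum_univ_succ]
  push_cast
  simp [consD]

lemma dotC_consD_left (d : Fin n → ℝ) (z : Fin (n+1) → ℂ) :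
    dotC n (consD n d) z = ∑ m, (d m : ℂ) * z m.succ := by
  rw [dotC, Fin.sum_univ_succ]
  simp [consD]

lemma refl_consD_zero (d : Fin n → ℝ) (z : Fin (n+1) → ℂ) :
    (refl n (consD n d) z) 0 = z 0 := by
  simp [refl_apply, consD]

lemma refl_consD_succ (d : Fin n → ℝ) (z : Fin (n+1) → ℂ) (k : Fin n) :
    (refl n (consD n d) z) k.succ
      = z k.succ - (2 * dotC n z (consD n d) / dotC n (consD n d) (consD n d)) * (d k : ℂ) := by
  simp [refl_apply, consD]

lemma refl_consD_memV (d : Fin n → ℝ) {z : Fin (n+1) → ℂ} (hz : memV n z) :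
    memV n (refl n (consD n d) z) := by
  have him : (∑ m, (d m : ℂ) * z m.succ).re = 0 := by
    rw [Complex.re_sum]
    apply Finset.sum_eq_zero
    intro m _
    rw [Complex.mul_re, Complex.ofReal_re, Complex.ofReal_im,
      hz.2 _ (Fin.succ_ne_zero m)]
    ring
  constructor
  · rw [refl_consD_zero]; exact hz.1
  · intro j hj
    rcases Fin.eq_zero_or_eq_succ j with rfl | ⟨k, rfl⟩
    · exact absurd rfl hj
    · rw [refl_consD_succ, dotC_consD, dotC_comm, dotC_consD_left]
      rw [Complex.sub_re, hz.2 _ (Fin.succ_ne_zero k)]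
      have h2 : (2 * ∑ m, (d m : ℂ) * z m.succ).re = 0 := by
        rw [Complex.mul_re, him]; simp
      rw [Complex.mul_re, Complex.ofReal_re, Complex.ofReal_im,
        Complex.div_ofReal_re, h2]
      simp

lemma isGc_refl_consD (d : Fin n → ℝ) : isGc n (refl n (consD n d)) := by
  refine ⟨refl_bij _, fun z w => refl_dot _ _ _, fun z hz => refl_consD_memV d hz, ?_⟩
  rw [refl_consD_zero]
  simp [stdC]


lemma refl_cons_real (P Q : Fin n → ℝ) (h : ∑ m, P m * P m = ∑ m, Q m * Q m) (w0 : ℂ) :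
    refl n (consD n (P - Q)) (Fin.cons w0 (fun k => (P k : ℂ)))
      = Fin.cons w0 (fun k => (Q k : ℂ)) := by
  by_cases hPQ : P = Q
  · subst hPQ
    have hD : dotC n (consD n (P - P)) (consD n (P - P)) = 0 := by
      rw [dotC_consD]; simp
    rw [refl_apply, hD]
    simp
  · have hex : ∃ m, P m ≠ Q m := by
      by_contra hc; push_neg at hc; exact hPQ (funext hc)
    obtain ⟨m0, hm0⟩ := hex
    have hs : 0 < ∑ m, (P m - Q m) * (P m - Q m) := by
      apply Finset.sum_pos' (fun m _ => mul_self_nonneg _)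
      exact ⟨m0, Finset.mem_univ _, mul_self_pos.mpr (sub_ne_zero.mpr hm0)⟩
    have key : (∑ m, (P m - Q m) * (P m - Q m)) = 2 * ∑ m, P m * (P m - Q m) := by
      have e1 : ∑ m, (P m - Q m) * (P m - Q m)
          = ∑ m, P m * P m + ∑ m, Q m * Q m - 2 * ∑ m, P m * Q m := by
        rw [← Finset.sum_add_distrib, Finset.mul_sum, ← Finset.sum_sub_distrib]
        exact Finset.sum_congr rfl (fun m _ => by ring)
      have e2 : ∑ m, P m * (P m - Q m) = ∑ m, P m * P m - ∑ m, P m * Q m := by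
        rw [← Finset.sum_sub_distrib]
        exact Finset.sum_congr rfl (fun m _ => by ring)
      linarith
    have hdz : dotC n (Fin.cons w0 (fun k => ((P k : ℝ) : ℂ))) (consD n (P - Q))
        = ((∑ m, P m * (P m - Q m) : ℝ) : ℂ) := by
      rw [dotC_comm, dotC_consD_left]
      push_cast
      exact Finset.sum_congr rfl (fun m _ => by
        simp [Fin.cons_succ]; ring)
    have hDD := dotC_consD (n := n) (P - Q) (P - Q)
    have hcoef : 2 * dotC n (Fin.cons w0 (fun k => ((P k : ℝ) : ℂ))) (consD n (P - Q))
        / dotC n (consD n (P - Q)) (consD n (P - Q)) = 1 := by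
      rw [hdz, hDD]
      simp only [Pi.sub_apply]
      rw [key]
      have hne : (∑ m, P m * (P m - Q m)) ≠ 0 := by
        intro h0; rw [key, h0] at hs; simp at hs
      push_cast
      rw [div_self]
      simp only [Ne, mul_eq_zero]
      push_neg
      exact ⟨two_ne_zero, by exact_mod_cast hne⟩
    funext j
    rcases Fin.eq_zero_or_eq_succ j with rfl | ⟨k, rfl⟩
    · rw [refl_consD_zero]
      rfl
    · rw [refl_consD_succ, hcoef]
      simp only [Fin.cons_succ, Pi.sub_apply, one_mul]
      push_cast
      ring

lemma last_ne_zero (hn : n ≠ 0) : (Fin.last n) ≠ (0 : Fin (n+1)) := by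
  intro hc
  exact hn (by simpa [Fin.ext_iff] using hc)

/-- The boost in the (0, n)-plane, with rapidity sinh⁻¹ a. -/
def Blast (n : ℕ) (a : ℝ) : (Fin (n+1) → ℂ) →ₗ[ℂ] (Fin (n+1) → ℂ) where
  toFun z := fun j =>
    if j = 0 then (Real.sqrt (1+a^2) : ℂ) * z 0 - Complex.I * (a:ℂ) * z (Fin.last n)
    else if j = Fin.last n then
      Complex.I * (a:ℂ) * z 0 + (Real.sqrt (1+a^2) : ℂ) * z (Fin.last n)
    else z j
  map_add' z w := by
    funext j
    simp only [Pi.add_apply]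
    split_ifs <;> ring
  map_smul' c z := by
    funext j
    simp only [Pi.smul_apply, smul_eq_mul, RingHom.id_apply]
    split_ifs <;> ring

lemma Blast_zero (a : ℝ) (z : Fin (n+1) → ℂ) :
    (Blast n a z) 0
      = (Real.sqrt (1+a^2) : ℂ) * z 0 - Complex.I * (a:ℂ) * z (Fin.last n) := rfl

lemma Blast_last (h : Fin.last n ≠ (0 : Fin (n+1))) (a : ℝ) (z : Fin (n+1) → ℂ) :
    (Blast n a z) (Fin.last n)
      = Complex.I * (a:ℂ) * z 0 + (Real.sqrt (1+a^2) : ℂ) * z (Fin.last n) := by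
  show (if Fin.last n = 0 then _ else if Fin.last n = Fin.last n then _ else _) = _
  rw [if_neg h, if_pos rfl]

lemma Blast_other {j : Fin (n+1)} (h0 : j ≠ 0) (hl : j ≠ Fin.last n) (a : ℝ)
    (z : Fin (n+1) → ℂ) : (Blast n a z) j = z j := by
  show (if j = 0 then _ else if j = Fin.last n then _ else _) = _
  rw [if_neg h0, if_neg hl]

lemma sqrt_sq_c (a : ℝ) :
    ((Real.sqrt (1+a^2) : ℝ) : ℂ) * ((Real.sqrt (1+a^2) : ℝ) : ℂ)
      = 1 + (a:ℂ) * (a:ℂ) := by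
  have : Real.sqrt (1+a^2) * Real.sqrt (1+a^2) = 1 + a^2 :=
    Real.mul_self_sqrt (by positivity)
  rw [← Complex.ofReal_mul, this]
  push_cast
  ring

lemma Blast_inv (h : Fin.last n ≠ (0 : Fin (n+1))) (a : ℝ) (z : Fin (n+1) → ℂ) :
    Blast n (-a) (Blast n a z) = z := by
  have hc := sqrt_sq_c a
  have hc' : ((Real.sqrt (1+(-a)^2) : ℝ) : ℂ) = ((Real.sqrt (1+a^2) : ℝ) : ℂ) := by
    norm_num
  funext j
  by_cases h0 : j = 0
  · subst h0
    rw [Blast_zero, Blast_zero, Blast_last h, hc']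
    push_cast
    linear_combination (z 0) * hc + ((a:ℂ) * (a:ℂ) * (z 0)) * Complex.I_mul_I
  · by_cases hl : j = Fin.last n
    · subst hl
      rw [Blast_last h, Blast_zero, Blast_last h, hc']
      push_cast
      linear_combination (z (Fin.last n)) * hc
        + ((a:ℂ) * (a:ℂ) * (z (Fin.last n))) * Complex.I_mul_I
    · rw [Blast_other h0 hl, Blast_other h0 hl]

lemma Blast_inv' (h : Fin.last n ≠ (0 : Fin (n+1))) (a : ℝ) (z : Fin (n+1) → ℂ) :
    Blast n a (Blast n (-a) z) = z := by
  have := Blast_inv h (-a) z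
  rwa [neg_neg] at this

lemma Blast_bij (h : Fin.last n ≠ (0 : Fin (n+1))) (a : ℝ) :
    Function.Bijective (Blast n a) := by
  constructor
  · intro z w hzw
    have := congrArg (Blast n (-a)) hzw
    rwa [Blast_inv h, Blast_inv h] at this
  · intro z
    exact ⟨Blast n (-a) z, Blast_inv' h a z⟩

lemma sum_split (h : Fin.last n ≠ (0 : Fin (n+1))) (F : Fin (n+1) → ℂ) :
    ∑ j, F j = F 0 + F (Fin.last n)
      + ∑ j ∈ (Finset.univ.erase 0).erase (Fin.last n), F j := by
  rw [← Finset.add_sum_erase _ F (Finset.mem_univ 0)]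
  rw [← Finset.add_sum_erase _ F (Finset.mem_erase.mpr ⟨h, Finset.mem_univ _⟩)]
  ring

lemma Blast_dot (h : Fin.last n ≠ (0 : Fin (n+1))) (a : ℝ) (z w : Fin (n+1) → ℂ) :
    dotC n (Blast n a z) (Blast n a w) = dotC n z w := by
  have hc := sqrt_sq_c a
  rw [dotC, dotC, sum_split h (fun j => Blast n a z j * Blast n a w j),
    sum_split h (fun j => z j * w j)]
  have hrest : ∑ j ∈ (Finset.univ.erase 0).erase (Fin.last n),
      Blast n a z j * Blast n a w j
      = ∑ j ∈ (Finset.univ.erase 0).erase (Fin.last n), z j * w j := by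
    apply Finset.sum_congr rfl
    intro j hj
    have hjl := (Finset.mem_erase.mp hj).1
    have hj0 := (Finset.mem_erase.mp (Finset.mem_erase.mp hj).2).1
    rw [Blast_other hj0 hjl, Blast_other hj0 hjl]
  rw [hrest, Blast_zero, Blast_zero, Blast_last h, Blast_last h]
  linear_combination (z 0 * w 0 + z (Fin.last n) * w (Fin.last n)) * hc
    + ((a:ℂ) * (a:ℂ) * (z 0 * w 0 + z (Fin.last n) * w (Fin.last n))) * Complex.I_mul_I

lemma Blast_memV (h : Fin.last n ≠ (0 : Fin (n+1))) (a : ℝ) {z : Fin (n+1) → ℂ}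
    (hz : memV n z) : memV n (Blast n a z) := by
  constructor
  · rw [Blast_zero, Complex.sub_im, Complex.mul_im, Complex.mul_im]
    simp [hz.1, hz.2 _ h]
  · intro j hj
    by_cases hl : j = Fin.last n
    · subst hl
      rw [Blast_last h, Complex.add_re, Complex.mul_re, Complex.mul_re]
      simp [hz.1, hz.2 _ h]
    · rw [Blast_other hj hl]
      exact hz.2 _ hj

lemma isGc_Blast (h : Fin.last n ≠ (0 : Fin (n+1))) (a : ℝ) : isGc n (Blast n a) := by
  refine ⟨Blast_bij h a, Blast_dot h a, fun z hz => Blast_memV h a hz, ?_⟩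
  rw [Blast_zero]
  have : stdC n 0 (Fin.last n) = 0 := by simp [stdC, h]
  rw [this]
  simp [stdC, Real.sqrt_pos]
  positivity


lemma memV_smul (c : ℝ) {z : Fin (n+1) → ℂ} (hz : memV n z) :
    memV n (((c : ℝ) : ℂ) • z) := by
  constructor
  · simp only [Pi.smul_apply, smul_eq_mul, Complex.mul_im, Complex.ofReal_re,
      Complex.ofReal_im, hz.1, mul_zero, zero_mul, add_zero]
  · intro j hj
    simp only [Pi.smul_apply, smul_eq_mul, Complex.mul_re, Complex.ofReal_re,
      Complex.ofReal_im, hz.2 _ hj, mul_zero, zero_mul, sub_zero]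

lemma eq_ofReal_re {z : ℂ} (h : z.im = 0) : z = ((z.re : ℝ) : ℂ) := by
  apply Complex.ext <;> simp [h]

lemma eq_im_mul_I {z : ℂ} (h : z.re = 0) : z = ((z.im : ℝ) : ℂ) * Complex.I := by
  apply Complex.ext <;> simp [h]

lemma zero_ne_last (hn : n ≠ 0) : (0 : Fin (n+1)) ≠ Fin.last n :=
  fun hc => last_ne_zero hn hc.symm

lemma supset_dir (hn : 2 ≤ n) {g : (Fin (n+1) → ℂ) →ₗ[ℂ] (Fin (n+1) → ℂ)}
    {v : Fin (n+1) → ℂ} (hg : isGc n g) (hv : memV n v) (hvlast : v (Fin.last n) = 0)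
    (hv0 : 0 < (v 0).re) (hvv : 0 < (dotC n v v).re)
    (hr0 : 0 < Real.sqrt ((dotC n v v).re)) (hrpi : Real.sqrt ((dotC n v v).re) < Real.pi) :
    memXi n (g (((Real.cos (Real.sqrt ((dotC n v v).re)) : ℝ) : ℂ) • stdC n (Fin.last n)
      + ((Real.sin (Real.sqrt ((dotC n v v).re)) / Real.sqrt ((dotC n v v).re) : ℝ) : ℂ) • v)) := by
  have h0l : (0 : Fin (n+1)) ≠ Fin.last n := zero_ne_last (by omega)
  set r := Real.sqrt ((dotC n v v).re) with hr
  have hL : (dotC n v v).re = r ^ 2 := (Real.sq_sqrt hvv.le).symm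
  have hdvv : dotC n v v = ((r ^ 2 : ℝ) : ℂ) := by
    rw [dotC_real hv hv, hL]
  have hsin : 0 < Real.sin r := Real.sin_pos_of_pos_of_lt_pi hr0 hrpi
  set p : Fin (n+1) → ℂ := ((Real.cos r : ℝ) : ℂ) • stdC n (Fin.last n)
      + ((Real.sin r / r : ℝ) : ℂ) • v with hpdef
  set x' : Fin (n+1) → ℂ := ((Real.sin r / r : ℝ) : ℂ) • v with hx'def
  set y' : Fin (n+1) → ℂ :=
    (fun j => if j = Fin.last n then -(Real.cos r : ℂ) * Complex.I else 0) with hy'def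
  have hy'V : memV n y' := by
    constructor
    · simp [hy'def, if_neg h0l]
    · intro j hj
      by_cases hl : j = Fin.last n
      · simp [hy'def, hl]
      · simp [hy'def, hl]
  have hx'plus : memVplus n x' := by
    refine ⟨memV_smul _ hv, ?_, ?_⟩
    · simp only [hx'def, Pi.smul_apply, smul_eq_mul, Complex.mul_re, Complex.ofReal_re,
        Complex.ofReal_im, zero_mul, sub_zero]
      exact mul_pos (div_pos hsin hr0) hv0
    · rw [hx'def, dotC_smul_left, dotC_smul_right, hdvv]
      have h9 : ((Real.sin r / r : ℝ) : ℂ) * (((Real.sin r / r : ℝ) : ℂ) * ((r ^ 2 : ℝ) : ℂ))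
          = ((Real.sin r * Real.sin r : ℝ) : ℂ) := by
        rw [← Complex.ofReal_mul, ← Complex.ofReal_mul]
        congr 1
        field_simp
      rw [h9, Complex.ofReal_re]
      exact mul_pos hsin hsin
  have hp : p = x' + Complex.I • y' := by
    funext j
    by_cases hl : j = Fin.last n
    · subst hl
      have e1 : stdC n (Fin.last n) (Fin.last n) = 1 := by simp [stdC]
      have e2 : y' (Fin.last n) = -(Real.cos r : ℂ) * Complex.I := by simp [hy'def]
      simp only [hpdef, hx'def, Pi.add_apply, Pi.smul_apply, smul_eq_mul, e1, e2, hvlast,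
        mul_zero, add_zero, mul_one, zero_add]
      linear_combination ((Real.cos r : ℂ)) * Complex.I_mul_I
    · have e1 : stdC n (Fin.last n) j = 0 := by simp [stdC, hl]
      have e2 : y' j = 0 := by simp [hy'def, hl]
      simp only [hpdef, hx'def, Pi.add_apply, Pi.smul_apply, smul_eq_mul, e1, e2,
        mul_zero, zero_add, add_zero]
  constructor
  · refine ⟨g x', g y', gc_mapsVplus hg hx'plus, hg.2.2.1 _ hy'V, ?_⟩
    rw [hp, map_add]
    simp only [LinearMap.map_smul]
  · rw [hg.2.1]
    rw [hpdef, dotC_add_left, dotC_add_right, dotC_add_right,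
      dotC_smul_left, dotC_smul_left, dotC_smul_left, dotC_smul_left,
      dotC_smul_right, dotC_smul_right, dotC_smul_right, dotC_smul_right]
    have h1 : dotC n (stdC n (Fin.last n)) (stdC n (Fin.last n)) = 1 := by
      rw [dotC_std_right]; simp [stdC]
    have h2 : dotC n (stdC n (Fin.last n)) v = 0 := by
      rw [dotC_std_left, hvlast]
    have h3 : dotC n v (stdC n (Fin.last n)) = 0 := by
      rw [dotC_std_right, hvlast]
    rw [h1, h2, h3, hdvv]
    have hrC : (r : ℂ) ≠ 0 := Complex.ofReal_ne_zero.mpr (ne_of_gt hr0)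
    push_cast
    field_simp
    linear_combination (r : ℂ) * Complex.sin_sq_add_cos_sq (r : ℂ)


lemma sum_split2 {k m : Fin n} (hkm : m ≠ k) (F : Fin n → ℝ) :
    ∑ j, F j = F k + F m + ∑ j ∈ (Finset.univ.erase k).erase m, F j := by
  rw [← Finset.add_sum_erase _ F (Finset.mem_univ k)]
  rw [← Finset.add_sum_erase _ F (Finset.mem_erase.mpr ⟨hkm, Finset.mem_univ _⟩)]
  ring

lemma exists_unit_perp (hn : 2 ≤ n) (f : Fin n → ℝ) :
    ∃ b : Fin n → ℝ, (∑ j, b j * b j) = 1 ∧ (∑ j, f j * b j) = 0 := by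
  by_cases hf : f = 0
  · refine ⟨fun j => if j = (⟨0, by omega⟩ : Fin n) then 1 else 0, ?_, ?_⟩
    · have e : ∀ j : Fin n, (if j = (⟨0, by omega⟩ : Fin n) then (1:ℝ) else 0)
          * (if j = (⟨0, by omega⟩ : Fin n) then (1:ℝ) else 0)
          = if j = (⟨0, by omega⟩ : Fin n) then (1:ℝ) else 0 := by
        intro j; split_ifs <;> ring
      rw [Finset.sum_congr rfl (fun j _ => e j)]
      simp
    · simp [hf]
  · obtain ⟨k, hk⟩ := Function.ne_iff.mp hf
    have hk' : f k ≠ 0 := by simpa using hk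
    have hcard : 1 < Fintype.card (Fin n) := by simp; omega
    obtain ⟨m, hm⟩ := Fintype.exists_ne_of_one_lt_card hcard k
    have hs : 0 < f k * f k + f m * f m := by
      nlinarith [mul_self_nonneg (f m), mul_self_pos.mpr hk']
    set s := Real.sqrt (f k * f k + f m * f m) with hsd
    have hs0 : 0 < s := Real.sqrt_pos.mpr hs
    have hss : s * s = f k * f k + f m * f m := Real.mul_self_sqrt hs.le
    set w : Fin n → ℝ := fun j => if j = k then f m else if j = m then -(f k) else 0
      with hwd
    have hwk : w k = f m := by simp [hwd]
    have hwm : w m = -(f k) := by simp [hwd, hm]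
    have hwj : ∀ j, j ≠ k → j ≠ m → w j = 0 := by
      intro j h1 h2; simp [hwd, h1, h2]
    refine ⟨fun j => w j / s, ?_, ?_⟩
    · rw [sum_split2 hm (fun j => w j / s * (w j / s))]
      have hrest : ∑ j ∈ (Finset.univ.erase k).erase m, w j / s * (w j / s) = 0 := by
        apply Finset.sum_eq_zero
        intro j hj
        have h2 := (Finset.mem_erase.mp hj).1
        have h1 := (Finset.mem_erase.mp (Finset.mem_erase.mp hj).2).1
        rw [hwj j h1 h2]
        simp
      rw [hrest, hwk, hwm]
      field_simp
      linarith [hss]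
    · rw [sum_split2 hm (fun j => f j * (w j / s))]
      have hrest : ∑ j ∈ (Finset.univ.erase k).erase m, f j * (w j / s) = 0 := by
        apply Finset.sum_eq_zero
        intro j hj
        have h2 := (Finset.mem_erase.mp hj).1
        have h1 := (Finset.mem_erase.mp (Finset.mem_erase.mp hj).2).1
        rw [hwj j h1 h2]
        simp
      rw [hrest, hwk, hwm]
      field_simp
      ring

lemma subset_dir (hn : 2 ≤ n) {x y : Fin (n+1) → ℂ} (hxp : memVplus n x) (hy : memV n y)
    (hdot : dotC n (x + Complex.I • y) (x + Complex.I • y) = 1) :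
    ∃ (g : (Fin (n+1) → ℂ) →ₗ[ℂ] (Fin (n+1) → ℂ)) (v : Fin (n+1) → ℂ),
      isGc n g ∧ memV n v ∧ v (Fin.last n) = 0 ∧ 0 < (v 0).re ∧ 0 < (dotC n v v).re ∧
      0 < Real.sqrt ((dotC n v v).re) ∧ Real.sqrt ((dotC n v v).re) < Real.pi ∧
      x + Complex.I • y
        = g (((Real.cos (Real.sqrt ((dotC n v v).re)) : ℝ) : ℂ) • stdC n (Fin.last n)
          + ((Real.sin (Real.sqrt ((dotC n v v).re)) / Real.sqrt ((dotC n v v).re) : ℝ) : ℂ) • v) := by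
  have hx := hxp.1
  have hnz : n ≠ 0 := by omega
  have hlast0 : Fin.last n ≠ (0 : Fin (n+1)) := last_ne_zero hnz
  have h0l : (0 : Fin (n+1)) ≠ Fin.last n := zero_ne_last hnz
  have hp0 : 0 < (x 0).re := hxp.2.1
  have hLx : 0 < (dotC n x x).re := hxp.2.2
  have hexp : ((dotC n x x).re : ℂ) - ((dotC n y y).re : ℂ)
      + 2 * ((dotC n x y).re : ℂ) * Complex.I = 1 := by
    have e : dotC n (x + Complex.I • y) (x + Complex.I • y)
        = dotC n x x + Complex.I * dotC n x y
          + (Complex.I * dotC n y x + Complex.I * (Complex.I * dotC n y y)) := by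
      rw [dotC_add_left, dotC_add_right, dotC_add_right, dotC_smul_left, dotC_smul_left,
        dotC_smul_right, dotC_smul_right]
    rw [e, dotC_comm y x, dotC_real hx hx, dotC_real hy hy, dotC_real hx hy] at hdot
    linear_combination hdot - (((dotC n y y).re : ℝ) : ℂ) * Complex.I_mul_I
  have hre : (dotC n x x).re - (dotC n y y).re = 1 := by
    have h := congrArg Complex.re hexp
    simpa using h
  have hPxy : (dotC n x y).re = 0 := by
    have h := congrArg Complex.im hexp
    simpa using h
  have hd1 := dotC_re hx hx
  have hd2 := dotC_re hy hy
  have hd3 := dotC_re hx hy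
  have hLx' : 0 < (x 0).re * (x 0).re - ∑ j : Fin n, (x j.succ).im * (x j.succ).im := by
    rw [← hd1]; exact hLx
  have hPxy' : (x 0).re * (y 0).re - ∑ j : Fin n, (x j.succ).im * (y j.succ).im = 0 := by
    rw [← hd3]; exact hPxy
  have hLy_le : (dotC n y y).re ≤ 0 := by
    rw [hd2]; exact perp_spacelike hp0 hLx' hPxy'
  have hnegLy_lt1 : -(dotC n y y).re < 1 := by linarith
  set β := Real.sqrt (-(dotC n y y).re) with hβd
  have hβ_nonneg : 0 ≤ β := Real.sqrt_nonneg _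
  have hβsq : β * β = -(dotC n y y).re := Real.mul_self_sqrt (by linarith)
  have hβ_lt1 : β < 1 := by nlinarith
  set r := Real.arccos β with hrd
  have hr_cos : Real.cos r = β := Real.cos_arccos (by linarith) (by linarith)
  have hr_pos : 0 < r := Real.arccos_pos.mpr hβ_lt1
  have hr_lt_pi : r < Real.pi := by
    have h1 : r ≤ Real.pi / 2 := Real.arccos_le_pi_div_two.mpr hβ_nonneg
    have h2 := Real.pi_pos
    linarith
  have hr_sin_sq : Real.sin r * Real.sin r = (dotC n x x).re := by
    rw [hrd, Real.sin_arccos, Real.mul_self_sqrt (by nlinarith)]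
    nlinarith
  have hsin_pos : 0 < Real.sin r := Real.sin_pos_of_pos_of_lt_pi hr_pos hr_lt_pi
  obtain ⟨A, B, hF1, hF2, hF3, hF4⟩ :
      ∃ (A : ℝ) (B : Fin n → ℝ),
        (∑ j : Fin n, B j * B j) = 1 + A * A ∧
        (x 0).re * A - (∑ j : Fin n, (x j.succ).im * B j) = 0 ∧
        β * A = (y 0).re ∧
        (∀ j, β * B j = (y j.succ).im) := by
    by_cases hy0 : y = 0
    · obtain ⟨b, hb1, hb2⟩ := exists_unit_perp hn (fun j => (x j.succ).im)
      have hβ0 : β = 0 := by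
        rw [hβd, hy0]
        simp [dotC]
      refine ⟨0, b, ?_, ?_, ?_, ?_⟩
      · rw [hb1]; ring
      · rw [hb2]; ring
      · rw [hβ0, hy0]; simp
      · intro j; rw [hβ0, hy0]; simp
    · have hh_pos : 0 < ∑ j : Fin n, (y j.succ).im * (y j.succ).im := by
        rcases lt_or_eq_of_le (Finset.sum_nonneg
          (fun (j : Fin n) _ => mul_self_nonneg ((y j.succ).im))) with h | h
        · exact h
        · exfalso
          have hall : ∀ j : Fin n, (y j.succ).im = 0 := by
            intro j
            have := (Finset.sum_eq_zero_iff_of_nonneg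
              (fun (j : Fin n) _ => mul_self_nonneg ((y j.succ).im))).mp h.symm
            exact mul_self_eq_zero.mp (this j (Finset.mem_univ j))
          have hsum0 : ∑ j : Fin n, (x j.succ).im * (y j.succ).im = 0 := by
            apply Finset.sum_eq_zero; intro j _; rw [hall j]; ring
          have hq0 : (y 0).re = 0 := by
            rw [hsum0] at hPxy'
            have h' : (x 0).re * (y 0).re = 0 := by linarith
            exact (mul_eq_zero.mp h').resolve_left (ne_of_gt hp0)
          apply hy0
          funext j
          rcases Fin.eq_zero_or_eq_succ j with rfl | ⟨k, rfl⟩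
          · apply Complex.ext
            · simpa using hq0
            · simpa using hy.1
          · apply Complex.ext
            · simpa using hy.2 _ (Fin.succ_ne_zero k)
            · simpa using hall k
      have hLy_lt : (dotC n y y).re < 0 := by
        rw [hd2]; exact perp_spacelike_strict hp0 hLx' hPxy' hh_pos
      have hβ_pos : 0 < β := Real.sqrt_pos.mpr (by linarith)
      have hβne : β ≠ 0 := ne_of_gt hβ_pos
      refine ⟨(y 0).re / β, fun j => (y j.succ).im / β, ?_, ?_, ?_, ?_⟩
      · have key : β * β * (∑ j : Fin n, ((y j.succ).im / β) * ((y j.succ).im / β))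
            = β * β * (1 + ((y 0).re / β) * ((y 0).re / β)) := by
          rw [Finset.mul_sum]
          have e1 : ∀ j : Fin n, β * β * ((y j.succ).im / β * ((y j.succ).im / β))
              = (y j.succ).im * (y j.succ).im := by
            intro j; field_simp
          rw [Finset.sum_congr rfl (fun j _ => e1 j)]
          have e2 : β * β * (1 + (y 0).re / β * ((y 0).re / β))
              = β * β + (y 0).re * (y 0).re := by
            field_simp
          rw [e2, hβsq]
          linarith [hd2]
        exact mul_left_cancel₀ (mul_ne_zero hβne hβne) key
      · have e : ∑ j : Fin n, (x j.succ).im * ((y j.succ).im / β)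
            = (∑ j : Fin n, (x j.succ).im * (y j.succ).im) / β := by
          rw [Finset.sum_div]
          exact Finset.sum_congr rfl (fun j _ => by ring)
        rw [e]
        field_simp
        linarith
      · field_simp
      · intro j; field_simp
  -- build the group element
  set a := -A with had
  set c := Real.sqrt (1 + a ^ 2) with hcd
  have hcc : c * c = 1 + A * A := by
    rw [hcd, Real.mul_self_sqrt (by positivity), had]
    ring
  rcases Fin.eq_zero_or_eq_succ (Fin.last n) with hbad | ⟨k0, hk0⟩
  · exact absurd hbad hlast0
  set P : Fin n → ℝ := fun k => if k = k0 then c else 0 with hPdef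
  set Q : Fin n → ℝ := fun k => -B k with hQdef
  have hPP : ∑ m : Fin n, P m * P m = c * c := by
    have e : ∀ m : Fin n, P m * P m = if m = k0 then c * c else 0 := by
      intro m; by_cases h : m = k0 <;> simp [hPdef, h]
    rw [Finset.sum_congr rfl (fun m _ => e m)]
    simp
  have hQQ : ∑ m : Fin n, Q m * Q m = c * c := by
    rw [hcc, ← hF1]
    exact Finset.sum_congr rfl (fun m _ => by simp [hQdef])
  set g := (refl n (consD n (P - Q))).comp (Blast n a) with hgd
  set ginv := (Blast n (-a)).comp (refl n (consD n (P - Q))) with hginvd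
  have hgc : isGc n g := gc_comp (isGc_refl_consD _) (isGc_Blast hlast0 a)
  have hginvgc : isGc n ginv := gc_comp (isGc_Blast hlast0 (-a)) (isGc_refl_consD _)
  have hgginv : ∀ w, g (ginv w) = w := by
    intro w
    simp only [hgd, hginvd, LinearMap.comp_apply]
    rw [Blast_inv' hlast0, refl_refl]
  have hginvg : ∀ w, ginv (g w) = w := by
    intro w
    simp only [hgd, hginvd, LinearMap.comp_apply]
    rw [refl_refl, Blast_inv hlast0]
  set W : Fin (n+1) → ℂ := Fin.cons (Complex.I * (A : ℂ)) (fun k => -((B k : ℝ) : ℂ)) with hWd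
  have haA : ((a : ℝ) : ℂ) = -((A : ℝ) : ℂ) := by rw [had]; push_cast; ring
  have hgen : g (stdC n (Fin.last n)) = W := by
    have h1 : Blast n a (stdC n (Fin.last n))
        = Fin.cons (Complex.I * (A : ℂ)) (fun k => ((P k : ℝ) : ℂ)) := by
      funext j
      rcases Fin.eq_zero_or_eq_succ j with rfl | ⟨k, rfl⟩
      · rw [Blast_zero]
        have e1 : stdC n (Fin.last n) 0 = 0 := by simp [stdC, h0l]
        have e2 : stdC n (Fin.last n) (Fin.last n) = 1 := by simp [stdC]
        rw [e1, e2, Fin.cons_zero, haA]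
        ring
      · rw [Fin.cons_succ]
        by_cases hk : k = k0
        · subst hk
          rw [← hk0, Blast_last hlast0]
          have e1 : stdC n (Fin.last n) 0 = 0 := by simp [stdC, h0l]
          have e2 : stdC n (Fin.last n) (Fin.last n) = 1 := by simp [stdC]
          rw [e1, e2]
          have e3 : P k = c := by simp [hPdef]
          rw [e3]
          ring
        · have hne : k.succ ≠ Fin.last n := by
            rw [hk0]
            exact fun hc => hk (Fin.succ_injective _ hc)
          rw [Blast_other (Fin.succ_ne_zero k) hne]
          have e1 : stdC n (Fin.last n) k.succ = 0 := by simp [stdC, hne]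
          have e3 : P k = 0 := by simp [hPdef, hk]
          rw [e1, e3]
          norm_num
    simp only [hgd, LinearMap.comp_apply]
    rw [h1, refl_cons_real P Q (by rw [hPP, hQQ]) (Complex.I * (A : ℂ))]
    funext j
    rcases Fin.eq_zero_or_eq_succ j with rfl | ⟨k, rfl⟩
    · rw [hWd, Fin.cons_zero, Fin.cons_zero]
    · rw [hWd, Fin.cons_succ, Fin.cons_succ]
      simp [hQdef]
  set v := ((r / Real.sin r : ℝ) : ℂ) • (ginv x) with hvd
  have hginvx_plus : memVplus n (ginv x) := gc_mapsVplus hginvgc hxp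
  have hvmem : memV n v := memV_smul _ hginvx_plus.1
  have hv0 : 0 < (v 0).re := by
    simp only [hvd, Pi.smul_apply, smul_eq_mul, Complex.mul_re, Complex.ofReal_re,
      Complex.ofReal_im, zero_mul, sub_zero]
    exact mul_pos (div_pos hr_pos hsin_pos) hginvx_plus.2.1
  have hdvx : dotC n (ginv x) (ginv x) = dotC n x x := hginvgc.2.1 x x
  have hdvv : dotC n v v
      = (((r / Real.sin r) * ((r / Real.sin r) * (dotC n x x).re) : ℝ) : ℂ) := by
    conv_lhs => rw [hvd, dotC_smul_left, dotC_smul_right, hdvx, dotC_real hx hx]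
    push_cast
    ring
  have hdvv_re : (dotC n v v).re = r ^ 2 := by
    rw [hdvv, Complex.ofReal_re, ← hr_sin_sq]
    field_simp
  have hvv_pos : 0 < (dotC n v v).re := by rw [hdvv_re]; positivity
  have hsqrt : Real.sqrt ((dotC n v v).re) = r := by
    rw [hdvv_re]; exact Real.sqrt_sq hr_pos.le
  have hdxW : dotC n x W = 0 := by
    rw [dotC, Fin.sum_univ_succ]
    simp only [hWd, Fin.cons_zero, Fin.cons_succ]
    have hx0 : x 0 = (((x 0).re : ℝ) : ℂ) := eq_ofReal_re hx.1
    have hxj : ∀ k : Fin n, x k.succ = (((x k.succ).im : ℝ) : ℂ) * Complex.I :=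
      fun k => eq_im_mul_I (hx.2 _ (Fin.succ_ne_zero k))
    have e : ∀ k : Fin n, x k.succ * (-((B k : ℝ) : ℂ))
        = -((((x k.succ).im * B k : ℝ) : ℂ)) * Complex.I := by
      intro k
      have h' := hxj k
      set t := (x k.succ).im with ht
      rw [h']
      push_cast
      ring
    rw [Finset.sum_congr rfl (fun k _ => e k), hx0]
    have e2 : ∑ k : Fin n, (-((((x k.succ).im * B k : ℝ) : ℂ)) * Complex.I)
        = -(((∑ k : Fin n, (x k.succ).im * B k : ℝ) : ℂ)) * Complex.I := by
      rw [← Finset.sum_mul]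
      congr 1
      push_cast
      rw [← Finset.sum_neg_distrib]
    rw [e2]
    have e3 : (∑ k : Fin n, (x k.succ).im * B k) = (x 0).re * A := by linarith
    rw [e3]
    push_cast
    ring
  have hvlast : v (Fin.last n) = 0 := by
    have h2 : dotC n (ginv x) (stdC n (Fin.last n)) = 0 := by
      rw [← hgc.2.1, hgginv, hgen]
      exact hdxW
    rw [dotC_std_right] at h2
    simp [hvd, h2]
  refine ⟨g, v, hgc, hvmem, hvlast, hv0, hvv_pos, ?_, ?_, ?_⟩
  · rw [hsqrt]; exact hr_pos
  · rw [hsqrt]; exact hr_lt_pi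
  · rw [hsqrt]
    rw [map_add]
    simp only [LinearMap.map_smul]
    rw [hgen]
    have hgv : g v = ((r / Real.sin r : ℝ) : ℂ) • x := by
      rw [hvd, LinearMap.map_smul, hgginv]
    rw [hgv, smul_smul]
    have e1 : ((Real.sin r / r : ℝ) : ℂ) * ((r / Real.sin r : ℝ) : ℂ) = 1 := by
      rw [← Complex.ofReal_mul]
      have : Real.sin r / r * (r / Real.sin r) = 1 := by
        field_simp
      rw [this]
      norm_num
    rw [e1, one_smul]
    funext j
    rcases Fin.eq_zero_or_eq_succ j with rfl | ⟨k, rfl⟩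
    · simp only [Pi.add_apply, Pi.smul_apply, smul_eq_mul, hWd, Fin.cons_zero]
      rw [eq_ofReal_re hy.1, hr_cos, ← hF3]
      push_cast
      ring
    · simp only [Pi.add_apply, Pi.smul_apply, smul_eq_mul, hWd, Fin.cons_succ]
      rw [eq_im_mul_I (hy.2 _ (Fin.succ_ne_zero k)), hr_cos, ← hF4 k]
      push_cast
      linear_combination ((β : ℂ) * ((B k : ℝ) : ℂ)) * Complex.I_mul_I

end Stmt8

/-- Theorem 3.8 (thm:3.9): Ξ = G^c·Exp_{e_n}(Ω^π_{e_n}), i.e. Ξ is the set of all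
g·(cos(r)e_n + (sin(r)/r)v) with v ∈ V, v_n = 0, v₀ > 0, [v,v]_V > 0, r = √[v,v]_V ∈ (0,π). -/
theorem stmt_8 (n : ℕ) (hn : 2 ≤ n) :
    {z : Fin (n+1) → ℂ | memXi n z} =
      {z : Fin (n+1) → ℂ | ∃ (g : (Fin (n+1) → ℂ) →ₗ[ℂ] (Fin (n+1) → ℂ))
          (v : Fin (n+1) → ℂ),
        isGc n g ∧ memV n v ∧ v (Fin.last n) = 0 ∧ 0 < (v 0).re ∧ 0 < (dotC n v v).re ∧
        0 < Real.sqrt ((dotC n v v).re) ∧ Real.sqrt ((dotC n v v).re) < Real.pi ∧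
        z = g (((Real.cos (Real.sqrt ((dotC n v v).re)) : ℝ) : ℂ) • stdC n (Fin.last n)
              + ((Real.sin (Real.sqrt ((dotC n v v).re)) / Real.sqrt ((dotC n v v).re) : ℝ) : ℂ) • v)} := by
  ext z
  simp only [Set.mem_setOf_eq]
  constructor
  · intro hz
    obtain ⟨⟨x, y, hxp, hy, rfl⟩, hdot⟩ := hz
    exact Stmt8.subset_dir hn hxp hy hdot
  · intro hz
    obtain ⟨g, v, hg, hv, hvlast, hv0, hvv, hr0, hrpi, rfl⟩ := hz
    exact Stmt8.supset_dir hn hg hv hvlast hv0 hvv hr0 hrpi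


end
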